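/- For any V ≥ 1 and integers r, m ≥ 1 with r ≤ m, the number of integer matrices Z ∈ ℤ^{r×m} with the property that there exist N₁,...,N_r ∈ ℕ with (2N₁+1)(2N₂+1)···(2N_r+1) ≤ V and every entry in the i-th row of Z having absolute value at most N_i, is at most C_m · V^m · (1 + log V)^{r−1}, where C_m depends only on m. -/

import Mathlib

open Finset

namespace Stmt18

variable (m : ℕ)

/-- box of sidelength 2n+1 -/
noncomputable def box (n : ℕ) : Finset (Fin m → ℤ) :=
  Fintype.piFinset fun _ => Finset.Icc (-(n:ℤ)) n

lemma mem_box {n : ℕ} {x : Fin m → ℤ} : x ∈ box m n ↔ ∀ j, (x j).natAbs ≤ n := by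
  simp only [box, Fintype.mem_piFinset, Finset.mem_Icc]
  constructor <;> intro h j <;> have := h j <;> omega

lemma card_box (n : ℕ) : (box m n).card = (2*n+1)^m := by
  simp [box, Fintype.card_piFinset, Int.card_Icc]
  congr 1
  omega

lemma box_mono {a b : ℕ} (h : a ≤ b) : box m a ⊆ box m b := by
  intro x hx
  rw [mem_box] at hx ⊢
  exact fun j => (hx j).trans h

/-- shell: elements of box n whose sup-norm is exactly n -/
noncomputable def R : ℕ → Finset (Fin m → ℤ)
  | 0 => box m 0
  | n+1 => box m (n+1) \ box m n

lemma pow_aux (b k : ℕ) : (b+2)^k ≤ b^k + 2*k*(b+2)^(k-1) := by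
  induction k with
  | zero => simp
  | succ k ih =>
    rcases Nat.eq_zero_or_pos k with hk | hk
    · subst hk; simp
    · have h1 : (b+2)^(k+1) = (b+2)^k * (b+2) := by ring
      have h2 : (b+2)^(k-1) * (b+2) = (b+2)^k := by
        rw [← pow_succ]
        congr 1
        omega
      calc (b+2)^(k+1) = (b+2)^k * (b+2) := h1
        _ ≤ (b^k + 2*k*(b+2)^(k-1)) * (b+2) := Nat.mul_le_mul_right _ ih
        _ = b^k * (b+2) + 2*k*((b+2)^(k-1)*(b+2)) := by ring
        _ = b^k * b + 2 * b^k + 2*k*(b+2)^k := by rw [h2]; ring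
        _ ≤ b^(k+1) + 2 * (b+2)^k + 2*k*(b+2)^k := by
            have : b^k ≤ (b+2)^k := Nat.pow_le_pow_left (by omega) _
            have hh : b^k * b = b^(k+1) := by ring
            omega
        _ = b^(k+1) + 2*(k+1)*(b+2)^k := by ring

lemma card_R (hm : 1 ≤ m) (n : ℕ) : (R m n).card ≤ 2*m*(2*n+1)^(m-1) := by
  cases n with
  | zero =>
    have : (R m 0).card = 1 := by simp [R, card_box]
    rw [this]
    calc 1 ≤ 2*m := by omega
      _ ≤ 2*m*(2*0+1)^(m-1) := by simp
  | succ n =>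
    have hsub : box m n ⊆ box m (n+1) := box_mono m (by omega)
    have hcard : (R m (n+1)).card = (2*(n+1)+1)^m - (2*n+1)^m := by
      rw [R, Finset.card_sdiff_of_subset hsub, card_box, card_box]
    rw [hcard]
    have := pow_aux (2*n+1) m
    have he : 2*n+1+2 = 2*(n+1)+1 := by omega
    rw [he] at this
    omega

lemma mem_R_sup (hm : 1 ≤ m) (x : Fin m → ℤ) :
    x ∈ R m (Finset.univ.sup fun j => (x j).natAbs) := by
  set n := Finset.univ.sup fun j => (x j).natAbs with hn
  have hle : ∀ j, (x j).natAbs ≤ n := fun j => Finset.le_sup (f := fun j => (x j).natAbs) (Finset.mem_univ j)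
  cases hn' : n with
  | zero =>
    rw [hn'] at hle
    simpa [R, mem_box] using hle
  | succ k =>
    haveI : Nonempty (Fin m) := Fin.pos_iff_nonempty.mp (by omega)
    have hne : (Finset.univ : Finset (Fin m)).Nonempty := Finset.univ_nonempty
    obtain ⟨j, _, hj⟩ := Finset.exists_mem_eq_sup Finset.univ hne fun j => (x j).natAbs
    rw [R, Finset.mem_sdiff]
    refine ⟨(mem_box m).2 (by rw [← hn']; exact hle), fun hc => ?_⟩
    have := (mem_box m).1 hc j
    rw [← hj, ← hn, hn'] at this
    omega

/-- weight of a row -/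
def w (x : Fin m → ℤ) : ℕ := 2 * (Finset.univ.sup fun j => (x j).natAbs) + 1

lemma w_pos (x : Fin m → ℤ) : 0 < w m x := by simp [w]

/-- the set of matrices counted -/
noncomputable def S (r K : ℕ) : Finset (Fin r → Fin m → ℤ) :=
  (Fintype.piFinset fun _ => box m K).filter fun Z => ∏ i, w m (Z i) ≤ K

lemma mem_S {r K : ℕ} {Z : Fin r → Fin m → ℤ} :
    Z ∈ S m r K ↔ ∏ i, w m (Z i) ≤ K := by
  rw [S, Finset.mem_filter, and_iff_right_iff_imp]
  intro h
  rw [Fintype.mem_piFinset]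
  intro i
  rw [mem_box]
  intro j
  have h1 : w m (Z i) ≤ K := by
    calc w m (Z i) = w m (Z i) * 1 := (mul_one _).symm
      _ ≤ w m (Z i) * ∏ i' ∈ Finset.univ.erase i, w m (Z i') := by
          apply Nat.mul_le_mul_left
          exact Nat.one_le_iff_ne_zero.2 (Finset.prod_ne_zero_iff.2 fun i' _ => (w_pos m _).ne')
      _ = ∏ i', w m (Z i') := Finset.mul_prod_erase Finset.univ (fun i' => w m (Z i')) (Finset.mem_univ i)
      _ ≤ K := h
  have h2 : (Z i j).natAbs ≤ Finset.univ.sup fun j => (Z i j).natAbs :=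
    Finset.le_sup (f := fun j => (Z i j).natAbs) (Finset.mem_univ j)
  rw [w] at h1
  omega

/-- the dominating recursively-defined sum -/
def g : ℕ → ℕ → ℝ
  | 0, _ => 1
  | r+1, K => ∑ n ∈ Finset.Icc 1 K, (n:ℝ)^(m-1) * g r (K / n)

lemma g_nonneg (r K : ℕ) : 0 ≤ g m r K := by
  induction r generalizing K with
  | zero => norm_num [g]
  | succ r ih =>
    rw [g]
    exact Finset.sum_nonneg fun n _ => mul_nonneg (by positivity) (ih _)


lemma card_S (hm : 1 ≤ m) : ∀ r K : ℕ, ((S m r K).card : ℝ) ≤ (2*m : ℝ)^r * g m r K := by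
  intro r
  induction r with
  | zero =>
    intro K
    have h1 : (S m 0 K).card ≤ 1 := by
      have := Finset.card_filter_le (Fintype.piFinset fun _ : Fin 0 => box m K)
        (fun Z => ∏ i, w m (Z i) ≤ K)
      simp [Fintype.card_piFinset] at this
      exact le_trans (Finset.card_le_card (Finset.filter_subset _ _)) (by simp)
    have : ((S m 0 K).card : ℝ) ≤ 1 := by exact_mod_cast h1
    simpa [g] using this
  | succ r ih =>
    intro K
    set A : Finset ℕ := (Finset.range (K+1)).filter (fun N0 => 2*N0+1 ≤ K) with hA
    set T : Finset (ℕ × ((Fin m → ℤ) × (Fin r → Fin m → ℤ))) :=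
      A.biUnion (fun N0 => {N0} ×ˢ (R m N0 ×ˢ S m r (K / (2*N0+1)))) with hT
    have hinj : (S m (r+1) K).card ≤ T.card := by
      apply Finset.card_le_card_of_injOn
        (fun Z => ((Finset.univ.sup fun j => (Z 0 j).natAbs), (Z 0, fun i => Z i.succ)))
      · intro Z hZ
        have hZ' := (mem_S m).1 hZ
        set N0 := Finset.univ.sup fun j => (Z 0 j).natAbs with hN0
        have hsplit : ∏ i, w m (Z i) = w m (Z 0) * ∏ i : Fin r, w m (Z i.succ) :=
          Fin.prod_univ_succ _
        have htailpos : 1 ≤ ∏ i : Fin r, w m (Z i.succ) :=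
          Nat.one_le_iff_ne_zero.2 (Finset.prod_ne_zero_iff.2 fun i _ => (w_pos m _).ne')
        have hw0 : w m (Z 0) ≤ K := by
          calc w m (Z 0) = w m (Z 0) * 1 := (mul_one _).symm
            _ ≤ w m (Z 0) * ∏ i : Fin r, w m (Z i.succ) := Nat.mul_le_mul_left _ htailpos
            _ = ∏ i, w m (Z i) := hsplit.symm
            _ ≤ K := hZ'
        have hw0' : 2*N0+1 ≤ K := hw0
        have htail : (fun i => Z i.succ) ∈ S m r (K / (2*N0+1)) := by
          rw [mem_S]
          rw [Nat.le_div_iff_mul_le (by omega : 0 < 2*N0+1)]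
          calc (∏ i : Fin r, w m (Z i.succ)) * (2*N0+1) = w m (Z 0) * ∏ i : Fin r, w m (Z i.succ) := by
                rw [mul_comm]; rfl
            _ = ∏ i, w m (Z i) := hsplit.symm
            _ ≤ K := hZ'
        rw [hT]
        apply Finset.mem_biUnion.2
        refine ⟨N0, ?_, ?_⟩
        · rw [hA]; simp only [Finset.mem_filter, Finset.mem_range]; omega
        · rw [Finset.mem_product, Finset.mem_product]
          exact ⟨Finset.mem_singleton_self _, mem_R_sup m hm (Z 0), htail⟩
      · intro Z hZ Z' hZ' heq
        simp only [Prod.mk.injEq] at heq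
        funext i
        refine Fin.cases ?_ ?_ i
        · exact heq.2.1
        · intro k
          exact congrFun heq.2.2 k
    have hcardT : (T.card : ℝ) ≤ ∑ N0 ∈ A, ((R m N0).card : ℝ) * ((S m r (K / (2*N0+1))).card : ℝ) := by
      have := Finset.card_biUnion_le (s := A)
        (t := fun N0 => {N0} ×ˢ (R m N0 ×ˢ S m r (K / (2*N0+1))))
      rw [hT]
      calc ((A.biUnion _).card : ℝ) ≤ ((∑ N0 ∈ A, ({N0} ×ˢ (R m N0 ×ˢ S m r (K / (2*N0+1)))).card : ℕ) : ℝ) := by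
            exact_mod_cast this
        _ = ∑ N0 ∈ A, ((R m N0).card : ℝ) * ((S m r (K / (2*N0+1))).card : ℝ) := by
            push_cast
            refine Finset.sum_congr rfl fun N0 _ => ?_
            rw [Finset.card_product, Finset.card_product, Finset.card_singleton]
            push_cast; ring
    set F : ℕ → ℝ := fun n => (n:ℝ)^(m-1) * g m r (K / n) with hF
    have hFnonneg : ∀ n, 0 ≤ F n := fun n => mul_nonneg (by positivity) (g_nonneg m _ _)
    have hterm : ∀ N0 ∈ A, ((R m N0).card : ℝ) * ((S m r (K / (2*N0+1))).card : ℝ)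
        ≤ (2*m : ℝ)^(r+1) * F (2*N0+1) := by
      intro N0 _
      have h1 : ((R m N0).card : ℝ) ≤ 2*m*((2*N0+1 : ℕ):ℝ)^(m-1) := by
        have := card_R m hm N0
        calc ((R m N0).card : ℝ) ≤ ((2*m*(2*N0+1)^(m-1) : ℕ) : ℝ) := by exact_mod_cast this
          _ = 2*m*((2*N0+1 : ℕ):ℝ)^(m-1) := by push_cast; ring
      have h2 := ih (K / (2*N0+1))
      calc ((R m N0).card : ℝ) * ((S m r (K / (2*N0+1))).card : ℝ)
          ≤ (2*m*((2*N0+1 : ℕ):ℝ)^(m-1)) * ((2*m : ℝ)^r * g m r (K / (2*N0+1))) := by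
            apply mul_le_mul h1 h2 (by positivity) (by positivity)
        _ = (2*m : ℝ)^(r+1) * F (2*N0+1) := by rw [hF]; ring
    have hsum : ∑ N0 ∈ A, F (2*N0+1) ≤ ∑ n ∈ Finset.Icc 1 K, F n := by
      have himg : ∑ N0 ∈ A, F (2*N0+1) = ∑ n ∈ A.image (fun N0 => 2*N0+1), F n := by
        rw [Finset.sum_image]
        intro a _ b _ h; simp only at h; omega
      rw [himg]
      apply Finset.sum_le_sum_of_subset_of_nonneg
      · intro n hn
        simp only [Finset.mem_image, hA, Finset.mem_filter, Finset.mem_range] at hn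
        obtain ⟨N0, ⟨_, h2⟩, rfl⟩ := hn
        simp only [Finset.mem_Icc]
        omega
      · intro n _ _
        exact hFnonneg n
    calc ((S m (r+1) K).card : ℝ) ≤ (T.card : ℝ) := by exact_mod_cast hinj
      _ ≤ ∑ N0 ∈ A, ((R m N0).card : ℝ) * ((S m r (K / (2*N0+1))).card : ℝ) := hcardT
      _ ≤ ∑ N0 ∈ A, (2*m : ℝ)^(r+1) * F (2*N0+1) := Finset.sum_le_sum hterm
      _ = (2*m : ℝ)^(r+1) * ∑ N0 ∈ A, F (2*N0+1) := by rw [Finset.mul_sum]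
      _ ≤ (2*m : ℝ)^(r+1) * ∑ n ∈ Finset.Icc 1 K, F n := by
          apply mul_le_mul_of_nonneg_left hsum (by positivity)
      _ = (2*m : ℝ)^(r+1) * g m (r+1) K := rfl

lemma harmonic_sum (K : ℕ) : ∑ n ∈ Finset.Icc 1 K, (n:ℝ)⁻¹ ≤ 1 + Real.log K := by
  have h := harmonic_le_one_add_log K
  have heq : ((harmonic K : ℚ) : ℝ) = ∑ n ∈ Finset.Icc 1 K, (n:ℝ)⁻¹ := by
    rw [harmonic_eq_sum_Icc]; push_cast; ring
  rw [← heq]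
  exact_mod_cast h

lemma g_le (hm : 1 ≤ m) : ∀ r, 1 ≤ r → ∀ K : ℕ, 1 ≤ K →
    g m r K ≤ (K:ℝ)^m * (1 + Real.log K)^(r-1) := by
  intro r hr
  induction r, hr using Nat.le_induction with
  | base =>
    intro K hK
    have : g m 1 K = ∑ n ∈ Finset.Icc 1 K, (n:ℝ)^(m-1) := by
      show (∑ n ∈ Finset.Icc 1 K, (n:ℝ)^(m-1) * g m 0 (K/n)) = _
      refine Finset.sum_congr rfl fun n _ => ?_
      show (n:ℝ)^(m-1) * 1 = _
      ring
    rw [this]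
    simp only [Nat.sub_self, pow_zero, mul_one]
    calc ∑ n ∈ Finset.Icc 1 K, (n:ℝ)^(m-1) ≤ ∑ n ∈ Finset.Icc 1 K, (K:ℝ)^(m-1) := by
          refine Finset.sum_le_sum fun n hn => ?_
          have := (Finset.mem_Icc.1 hn).2
          exact pow_le_pow_left₀ (by positivity) (by exact_mod_cast this) _
      _ = K * (K:ℝ)^(m-1) := by
          rw [Finset.sum_const, Nat.card_Icc]
          simp
      _ = (K:ℝ)^m := by
          rw [← pow_succ']
          congr 1
          omega
  | succ r hr ih =>
    intro K hK
    have hK0 : (0:ℝ) < K := by exact_mod_cast hK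
    have hlogK : 0 ≤ Real.log K := Real.log_nonneg (by exact_mod_cast hK)
    have hterm : ∀ n ∈ Finset.Icc 1 K, (n:ℝ)^(m-1) * g m r (K / n)
        ≤ ((K:ℝ)^m * (1 + Real.log K)^(r-1)) * (n:ℝ)⁻¹ := by
      intro n hn
      obtain ⟨hn1, hnK⟩ := Finset.mem_Icc.1 hn
      have hdiv1 : 1 ≤ K / n := (Nat.one_le_div_iff (by omega)).2 hnK
      have hn0 : (0:ℝ) < n := by exact_mod_cast hn1
      have h1 := ih (K / n) hdiv1
      have h2 : ((K / n : ℕ) : ℝ)^m ≤ ((K:ℝ)/n)^m :=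
        pow_le_pow_left₀ (by positivity) (Nat.cast_div_le) _
      have h3 : (1 + Real.log (K / n : ℕ))^(r-1) ≤ (1 + Real.log K)^(r-1) := by
        apply pow_le_pow_left₀
        · have : (1:ℝ) ≤ ((K / n : ℕ) : ℝ) := by exact_mod_cast hdiv1
          have := Real.log_nonneg this
          linarith
        · have hle : (K / n : ℕ) ≤ K := Nat.div_le_self K n
          have := Real.log_le_log (by exact_mod_cast hdiv1 : (0:ℝ) < ((K / n : ℕ):ℝ))
            (by exact_mod_cast hle : ((K / n : ℕ):ℝ) ≤ (K:ℝ))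
          linarith
      have hgd : g m r (K / n) ≤ ((K:ℝ)/n)^m * (1 + Real.log K)^(r-1) := by
        calc g m r (K / n) ≤ ((K / n : ℕ) : ℝ)^m * (1 + Real.log (K / n : ℕ))^(r-1) := h1
          _ ≤ ((K:ℝ)/n)^m * (1 + Real.log K)^(r-1) := by
              apply mul_le_mul h2 h3 (by positivity) (by positivity)
      have hkey : (n:ℝ)^(m-1) * ((K:ℝ)/n)^m = (K:ℝ)^m * (n:ℝ)⁻¹ := by
        have hnm : (n:ℝ)^m = (n:ℝ)^(m-1) * n := by
          rw [← pow_succ]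
          congr 1
          omega
        rw [div_pow]
        field_simp
        rw [hnm]
      calc (n:ℝ)^(m-1) * g m r (K / n)
          ≤ (n:ℝ)^(m-1) * (((K:ℝ)/n)^m * (1 + Real.log K)^(r-1)) :=
            mul_le_mul_of_nonneg_left hgd (by positivity)
        _ = ((n:ℝ)^(m-1) * ((K:ℝ)/n)^m) * (1 + Real.log K)^(r-1) := by ring
        _ = ((K:ℝ)^m * (1 + Real.log K)^(r-1)) * (n:ℝ)⁻¹ := by rw [hkey]; ring
    calc g m (r+1) K = ∑ n ∈ Finset.Icc 1 K, (n:ℝ)^(m-1) * g m r (K / n) := rfl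
      _ ≤ ∑ n ∈ Finset.Icc 1 K, ((K:ℝ)^m * (1 + Real.log K)^(r-1)) * (n:ℝ)⁻¹ :=
          Finset.sum_le_sum hterm
      _ = ((K:ℝ)^m * (1 + Real.log K)^(r-1)) * ∑ n ∈ Finset.Icc 1 K, (n:ℝ)⁻¹ := by
          rw [Finset.mul_sum]
      _ ≤ ((K:ℝ)^m * (1 + Real.log K)^(r-1)) * (1 + Real.log K) := by
          apply mul_le_mul_of_nonneg_left (harmonic_sum K) (by positivity)
      _ = (K:ℝ)^m * (1 + Real.log K)^(r-1+1) := by ring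
      _ = (K:ℝ)^m * (1 + Real.log K)^(r+1-1) := by
          congr 2
          omega

end Stmt18

/-- For every `m ≥ 1` there is a constant `C_m` such that for all
`1 ≤ r ≤ m` and all real `V ≥ 1`, the set of integer matrices `Z ∈ ℤ^{r×m}` for which
there exist `N₁,...,N_r ∈ ℕ` with `(2N₁+1)···(2N_r+1) ≤ V` and every entry in the `i`-th
row of `Z` of absolute value at most `Nᵢ`, is finite and has at most
`C_m · V^m · (1 + log V)^{r−1}` elements. -/
theorem stmt18 (m : ℕ) (hm : 1 ≤ m) :
    ∃ C : ℝ, 0 < C ∧ ∀ (r : ℕ), 1 ≤ r → r ≤ m → ∀ V : ℝ, 1 ≤ V →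
      {Z : Matrix (Fin r) (Fin m) ℤ | ∃ N : Fin r → ℕ,
          (∏ i, (2 * (N i : ℝ) + 1)) ≤ V ∧ ∀ i j, |Z i j| ≤ (N i : ℤ)}.Finite ∧
      ({Z : Matrix (Fin r) (Fin m) ℤ | ∃ N : Fin r → ℕ,
          (∏ i, (2 * (N i : ℝ) + 1)) ≤ V ∧ ∀ i j, |Z i j| ≤ (N i : ℤ)}.ncard : ℝ)
        ≤ C * V ^ m * (1 + Real.log V) ^ (r - 1) := by
  refine ⟨(2*m : ℝ)^m, by positivity, ?_⟩
  intro r hr hrm V hV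
  set K := ⌊V⌋₊ with hK
  have hK1 : 1 ≤ K := Nat.le_floor (by simpa using hV)
  have hKV : (K:ℝ) ≤ V := Nat.floor_le (by linarith)
  have hset : {Z : Matrix (Fin r) (Fin m) ℤ | ∃ N : Fin r → ℕ,
      (∏ i, (2 * (N i : ℝ) + 1)) ≤ V ∧ ∀ i j, |Z i j| ≤ (N i : ℤ)}
      = ((show Finset (Matrix (Fin r) (Fin m) ℤ) from Stmt18.S m r K) : Set (Matrix (Fin r) (Fin m) ℤ)) := by
    ext Z
    simp only [Set.mem_setOf_eq, Finset.mem_coe, Stmt18.mem_S]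
    constructor
    · rintro ⟨N, hprod, habs⟩
      have hsup : ∀ i, Stmt18.w m (Z i) ≤ 2 * N i + 1 := by
        intro i
        have : (Finset.univ.sup fun j => (Z i j).natAbs) ≤ N i := by
          apply Finset.sup_le
          intro j _
          have := habs i j
          rw [abs_le] at this
          omega
        rw [Stmt18.w]
        omega
      have h1 : (∏ i, Stmt18.w m (Z i)) ≤ ∏ i, (2 * N i + 1) :=
        Finset.prod_le_prod' fun i _ => hsup i
      have h2 : ((∏ i, (2 * N i + 1) : ℕ) : ℝ) ≤ V := by
        push_cast
        exact hprod
      have h3 : (∏ i, (2 * N i + 1)) ≤ K := Nat.le_floor h2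
      exact (Stmt18.mem_S m).2 (h1.trans h3)
    · intro h
      have h0 := (Stmt18.mem_S m).1 h
      refine ⟨fun i => Finset.univ.sup fun j => (Z i j).natAbs, ?_, ?_⟩
      · have : ((∏ i, Stmt18.w m (Z i) : ℕ) : ℝ) ≤ (K:ℝ) := by exact_mod_cast h0
        calc (∏ i, (2 * (((Finset.univ.sup fun j => (Z i j).natAbs : ℕ)) : ℝ) + 1))
            = ((∏ i, Stmt18.w m (Z i) : ℕ) : ℝ) := by
              push_cast [Stmt18.w]
              rfl
          _ ≤ (K:ℝ) := this
          _ ≤ V := hKV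
      · intro i j
        have : (Z i j).natAbs ≤ Finset.univ.sup fun j => (Z i j).natAbs :=
          Finset.le_sup (f := fun j => (Z i j).natAbs) (Finset.mem_univ j)
        show |Z i j| ≤ ((Finset.univ.sup fun j => (Z i j).natAbs : ℕ) : ℤ)
        rw [abs_le]
        omega
  rw [hset]
  refine ⟨Finset.finite_toSet _, ?_⟩
  refine (congrArg (Nat.cast : ℕ → ℝ) (Set.ncard_coe_finset (Stmt18.S m r K))).trans_le ?_
  have h1 := Stmt18.card_S m hm r K
  have h2 := Stmt18.g_le m hm r hr K hK1
  have hg0 : 0 ≤ Stmt18.g m r K := Stmt18.g_nonneg m r K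
  have hlogK : 0 ≤ Real.log K := Real.log_nonneg (by exact_mod_cast hK1)
  have hlogle : Real.log K ≤ Real.log V := by
    apply Real.log_le_log (by exact_mod_cast hK1) hKV
  have hm2 : (1:ℝ) ≤ 2*m := by
    have : (1:ℕ) ≤ m := hm
    have : (1:ℝ) ≤ m := by exact_mod_cast this
    linarith
  calc ((Stmt18.S m r K).card : ℝ) ≤ (2*m : ℝ)^r * Stmt18.g m r K := h1
    _ ≤ (2*m : ℝ)^m * Stmt18.g m r K := by
        apply mul_le_mul_of_nonneg_right (pow_le_pow_right₀ hm2 hrm) hg0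
    _ ≤ (2*m : ℝ)^m * ((K:ℝ)^m * (1 + Real.log K)^(r-1)) := by
        apply mul_le_mul_of_nonneg_left h2 (by positivity)
    _ ≤ (2*m : ℝ)^m * ((V:ℝ)^m * (1 + Real.log V)^(r-1)) := by
        apply mul_le_mul_of_nonneg_left _ (by positivity)
        apply mul_le_mul
        · exact pow_le_pow_left₀ (by positivity) hKV _
        · exact pow_le_pow_left₀ (by linarith) (by linarith) _
        · positivity
        · positivity
    _ = (2*m : ℝ)^m * V^m * (1 + Real.log V)^(r-1) := by ring
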